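/- With the same setup, the trace distance D(ρ^{00}_odd, ρ^{01}_odd) = 1/2^{n-2}, where |Ψ^{01}⟩ = ½(|i⟩+|i⊕k₁⟩−|i⊕k₂⟩−|i⊕k₁⊕k₂⟩). -/

import Mathlib

open Matrix Finset
open scoped ComplexOrder Kronecker

/-- Trace norm `tr √(Aᴴ A)` of a complex square matrix. -/
noncomputable def traceNorm {ι : Type*} [Fintype ι] [DecidableEq ι] (A : Matrix ι ι ℂ) : ℝ :=
  (((Matrix.posSemidef_conjTranspose_mul_self A).1.eigenvectorUnitary.1 *
      diagonal (((↑) : ℝ → ℂ) ∘ (√·) ∘ (Matrix.posSemidef_conjTranspose_mul_self A).1.eigenvalues) *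
      (star (Matrix.posSemidef_conjTranspose_mul_self A).1.eigenvectorUnitary : Matrix ι ι ℂ)).trace).re

/-- Bitwise XOR on bit strings. -/
def xo {n : ℕ} (i k : Fin n → Bool) : Fin n → Bool := fun j => xor (i j) (k j)

/-- Hamming weight of a bit string. -/
def wt {n : ℕ} (i : Fin n → Bool) : ℕ := (Finset.univ.filter fun j => i j = true).card

/-- Index type for `n = 2m` qubits, split into two halves of `m` qubits. -/
abbrev Idx (m : ℕ) := (Fin m → Bool) × (Fin m → Bool)

/-- Bitwise XOR on split bit strings. -/
def xo2 {m : ℕ} (i k : Idx m) : Idx m := (xo i.1 k.1, xo i.2 k.2)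

/-- Basis vector `|i⟩`. -/
def ket2 {m : ℕ} (i : Idx m) : Idx m → ℂ := fun j => if j = i then 1 else 0

/-- Sign `(-1)^a`. -/
def sgn (a : Bool) : ℂ := if a then -1 else 1

/-- The state `|Ψ^{ab}_{k₁,k₂,i}⟩ = ½(|i⟩+(-1)^a|i⊕k₁⟩+(-1)^b|i⊕k₂⟩+(-1)^{a+b}|i⊕k₁⊕k₂⟩)`. -/
noncomputable def Psi {m : ℕ} (k1 k2 i : Idx m) (a b : Bool) : Idx m → ℂ :=
  (1/2 : ℂ) • (ket2 i + sgn a • ket2 (xo2 i k1) + sgn b • ket2 (xo2 i k2)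
    + (sgn a * sgn b) • ket2 (xo2 (xo2 i k1) k2))

/-- Hermitian inner product `⟨u|v⟩`. -/
noncomputable def dot {m : ℕ} (u v : Idx m → ℂ) : ℂ :=
  ∑ j, starRingEnd ℂ (u j) * v j
/-- Outer product `|v⟩⟨v|`. -/
noncomputable def outer {m : ℕ} (v : Idx m → ℂ) : Matrix (Idx m) (Idx m) ℂ :=
  Matrix.of fun p q => v p * starRingEnd ℂ (v q)

/-- The set of admissible key pairs `(k₁,k₂) = ((k₁₁,k₁₂),(k₂₁,k₂₂))`:
`W_H(k₁₁)`, `W_H(k₂₂)` odd and `W_H(k₁₂)`, `W_H(k₂₁)` even. -/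
def KeyPairs (m : ℕ) : Finset (Idx m × Idx m) :=
  Finset.univ.filter fun q =>
    Odd (wt q.1.1) ∧ Even (wt q.1.2) ∧ Even (wt q.2.1) ∧ Odd (wt q.2.2)

/-- The averaged state `ρ^{ab}_odd`. -/
noncomputable def rhoOdd2 (m : ℕ) (a b : Bool) : Matrix (Idx m) (Idx m) ℂ :=
  ((1 : ℂ) / (2 ^ (4*m - 4) * 2 ^ (2*m))) •
    ∑ q ∈ KeyPairs m, ∑ i : Idx m, outer (Psi q.1 q.2 i a b)
section Aux
variable {m : ℕ}

lemma xo_comm {n : ℕ} (a b : Fin n → Bool) : xo a b = xo b a := by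
  funext j; simp [xo, Bool.xor_comm]
lemma xo_assoc {n : ℕ} (a b c : Fin n → Bool) : xo (xo a b) c = xo a (xo b c) := by
  funext j; simp [xo, Bool.xor_assoc]
lemma xo_left_comm {n : ℕ} (a b c : Fin n → Bool) : xo a (xo b c) = xo b (xo a c) := by
  funext j; exact Bool.xor_left_comm _ _ _
lemma xo_self {n : ℕ} (a : Fin n → Bool) : xo a a = fun _ => false := by
  funext j; simp [xo]
lemma xo_self_left {n : ℕ} (a b : Fin n → Bool) : xo a (xo a b) = b := by
  funext j; simp [xo, ← Bool.xor_assoc]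
lemma xo_false {n : ℕ} (a : Fin n → Bool) : xo (fun _ => false) a = a := by
  funext j; simp [xo]
lemma xo_false' {n : ℕ} (a : Fin n → Bool) : xo a (fun _ => false) = a := by
  funext j; simp [xo]

/-- the zero string -/
def zr (m : ℕ) : Idx m := (fun _ => false, fun _ => false)

lemma xo2_comm (a b : Idx m) : xo2 a b = xo2 b a := by simp [xo2, xo_comm]
lemma xo2_assoc (a b c : Idx m) : xo2 (xo2 a b) c = xo2 a (xo2 b c) := by
  simp [xo2, xo_assoc]
lemma xo2_left_comm (a b c : Idx m) : xo2 a (xo2 b c) = xo2 b (xo2 a c) := by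
  simp [xo2, xo_left_comm]
lemma xo2_self (a : Idx m) : xo2 a a = zr m := by simp [xo2, xo_self, zr]
lemma xo2_self_left (a b : Idx m) : xo2 a (xo2 a b) = b := by simp [xo2, xo_self_left]
lemma xo2_zero (a : Idx m) : xo2 (zr m) a = a := by simp [xo2, zr, xo_false]
lemma xo2_zero' (a : Idx m) : xo2 a (zr m) = a := by simp [xo2, zr, xo_false']
lemma xo2_cancel (a b : Idx m) : xo2 (xo2 a b) b = a := by
  rw [xo2_assoc, xo2_self, xo2_zero']
lemma xo2_eq_iff (a b c : Idx m) : xo2 a b = c ↔ a = xo2 c b := by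
  constructor
  · rintro rfl; rw [xo2_cancel]
  · rintro rfl; rw [xo2_cancel]

lemma eq_iff_zr (a b : Idx m) : a = b ↔ xo2 a b = zr m := by
  rw [xo2_eq_iff, xo2_zero]
lemma eq_iff_eq_of_xo2 {a b c d : Idx m} (h : xo2 a b = xo2 c d) :
    (a = b) ↔ (c = d) := by
  rw [eq_iff_zr a b, h, ← eq_iff_zr]

lemma ket2_sum (x y : Idx m) :
    (∑ i : Idx m, ket2 x i * ket2 y i) = if x = y then (1 : ℂ) else 0 := by
  simp [ket2, mul_ite, mul_one, mul_zero, Finset.sum_ite_eq, eq_comm]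

lemma psi_apply (k1 k2 i : Idx m) (a b : Bool) (p : Idx m) :
    Psi k1 k2 i a b p = (1/2 : ℂ) * (ket2 p i + sgn a * ket2 (xo2 p k1) i
      + sgn b * ket2 (xo2 p k2) i + (sgn a * sgn b) * ket2 (xo2 (xo2 p k1) k2) i) := by
  have h1 : (p = i) ↔ (i = p) := eq_comm
  have h2 : (p = xo2 i k1) ↔ (i = xo2 p k1) := by rw [eq_comm, xo2_eq_iff]
  have h3 : (p = xo2 i k2) ↔ (i = xo2 p k2) := by rw [eq_comm, xo2_eq_iff]
  have h4 : (p = xo2 (xo2 i k1) k2) ↔ (i = xo2 (xo2 p k1) k2) := by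
    rw [eq_comm, xo2_assoc, xo2_eq_iff, ← xo2_assoc]
  simp only [Psi, Pi.smul_apply, Pi.add_apply, smul_eq_mul, ket2, h1, h2, h3, h4]

lemma star_ket2 (x i : Idx m) : (starRingEnd ℂ) (ket2 x i) = ket2 x i := by
  simp [ket2, apply_ite]
lemma star_sgn (a : Bool) : (starRingEnd ℂ) (sgn a) = sgn a := by
  cases a <;> simp [sgn]

lemma psi_star (k1 k2 i : Idx m) (a b : Bool) (q : Idx m) :
    (starRingEnd ℂ) (Psi k1 k2 i a b q) = Psi k1 k2 i a b q := by
  simp only [psi_apply, _root_.map_mul, _root_.map_add, map_div₀, _root_.map_one, _root_.map_ofNat, star_ket2, star_sgn]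

end Aux
section Aux2
variable {m : ℕ}

/-- translation matrix -/
noncomputable def Tmat (d : Idx m) : Matrix (Idx m) (Idx m) ℂ :=
  Matrix.of fun p q => if xo2 p q = d then 1 else 0

lemma key_sum (k1 k2 : Idx m) :
    (∑ i : Idx m, (outer (Psi k1 k2 i false false) - outer (Psi k1 k2 i false true)))
      = (2 : ℂ) • (Tmat k2 + Tmat (xo2 k1 k2)) := by
  ext p q
  have h1 : (p = xo2 q k2) ↔ (xo2 p q = k2) :=
    eq_iff_eq_of_xo2 (by simp [xo2_assoc, xo2_comm, xo2_left_comm, xo2_self_left, xo2_self,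
      xo2_zero, xo2_zero'])
  have h2 : (p = xo2 (xo2 q k1) k2) ↔ (xo2 p q = xo2 k1 k2) :=
    eq_iff_eq_of_xo2 (by simp [xo2_assoc, xo2_comm, xo2_left_comm, xo2_self_left, xo2_self,
      xo2_zero, xo2_zero'])
  have h3 : (xo2 p k1 = xo2 q k2) ↔ (xo2 p q = xo2 k1 k2) :=
    eq_iff_eq_of_xo2 (by simp [xo2_assoc, xo2_comm, xo2_left_comm, xo2_self_left, xo2_self,
      xo2_zero, xo2_zero'])
  have h4 : (xo2 p k1 = xo2 (xo2 q k1) k2) ↔ (xo2 p q = k2) :=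
    eq_iff_eq_of_xo2 (by simp [xo2_assoc, xo2_comm, xo2_left_comm, xo2_self_left, xo2_self,
      xo2_zero, xo2_zero'])
  have h5 : (xo2 p k2 = q) ↔ (xo2 p q = k2) :=
    eq_iff_eq_of_xo2 (by simp [xo2_assoc, xo2_comm, xo2_left_comm, xo2_self_left, xo2_self,
      xo2_zero, xo2_zero'])
  have h6 : (xo2 p k2 = xo2 q k1) ↔ (xo2 p q = xo2 k1 k2) :=
    eq_iff_eq_of_xo2 (by simp [xo2_assoc, xo2_comm, xo2_left_comm, xo2_self_left, xo2_self,
      xo2_zero, xo2_zero'])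
  have h7 : (xo2 (xo2 p k1) k2 = q) ↔ (xo2 p q = xo2 k1 k2) :=
    eq_iff_eq_of_xo2 (by simp [xo2_assoc, xo2_comm, xo2_left_comm, xo2_self_left, xo2_self,
      xo2_zero, xo2_zero'])
  have h8 : (xo2 (xo2 p k1) k2 = xo2 q k1) ↔ (xo2 p q = k2) :=
    eq_iff_eq_of_xo2 (by simp [xo2_assoc, xo2_comm, xo2_left_comm, xo2_self_left, xo2_self,
      xo2_zero, xo2_zero'])
  have expand : ∀ i : Idx m,
      Psi k1 k2 i false false p * (starRingEnd ℂ) (Psi k1 k2 i false false q)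
        - Psi k1 k2 i false true p * (starRingEnd ℂ) (Psi k1 k2 i false true q)
      = (1/2 : ℂ) * ((ket2 p i + ket2 (xo2 p k1) i)
            * (ket2 (xo2 q k2) i + ket2 (xo2 (xo2 q k1) k2) i)
          + (ket2 (xo2 p k2) i + ket2 (xo2 (xo2 p k1) k2) i)
            * (ket2 q i + ket2 (xo2 q k1) i)) := by
    intro i
    rw [psi_star, psi_star]
    simp only [psi_apply, sgn, if_true, if_false, Bool.false_eq_true, ite_false, ite_true]
    ring
  simp only [Matrix.sum_apply, Matrix.sub_apply, outer, Matrix.of_apply]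
  rw [Finset.sum_congr rfl fun i _ => expand i, ← Finset.mul_sum]
  simp only [add_mul, mul_add, Finset.sum_add_distrib, ket2_sum]
  simp only [h1, h2, h3, h4, h5, h6, h7, h8]
  simp only [Matrix.smul_apply, Matrix.add_apply, Tmat, Matrix.of_apply, smul_eq_mul]
  ring
end Aux2
section Aux3
variable {m : ℕ}

lemma wt_card_filter {n : ℕ} (x : Fin n → Bool) :
    wt x = ∑ j, (if x j = true then 1 else 0) := by
  rw [wt, Finset.card_filter]

lemma wt_xo_cast {n : ℕ} (x y : Fin n → Bool) :
    ((wt (xo x y) : ZMod 2)) = (wt x : ZMod 2) + (wt y : ZMod 2) := by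
  rw [wt_card_filter, wt_card_filter, wt_card_filter]
  push_cast
  rw [← Finset.sum_add_distrib]
  refine Finset.sum_congr rfl fun j _ => ?_
  cases hx : x j <;> cases hy : y j <;> simp [xo, hx, hy] <;> decide

lemma even_wt_xo {n : ℕ} (x y : Fin n → Bool) :
    Even (wt (xo x y)) ↔ (Even (wt x) ↔ Even (wt y)) := by
  have h : wt (xo x y) ≡ wt x + wt y [MOD 2] := by
    rw [← ZMod.natCast_eq_natCast_iff]; push_cast [wt_xo_cast]; ring
  rw [Nat.even_iff, Nat.even_iff, Nat.even_iff, h, Nat.add_mod]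
  omega

lemma odd_wt_xo {n : ℕ} (x y : Fin n → Bool) :
    Odd (wt (xo x y)) ↔ ¬ (Even (wt x) ↔ Even (wt y)) := by
  rw [← Nat.not_even_iff_odd, even_wt_xo]

/-- even weight strings -/
def evenF (m : ℕ) : Finset (Fin m → Bool) := Finset.univ.filter fun x => Even (wt x)
/-- odd weight strings -/
def oddF (m : ℕ) : Finset (Fin m → Bool) := Finset.univ.filter fun x => Odd (wt x)

lemma card_evenF_add_card_oddF : (evenF m).card + (oddF m).card = 2 ^ m := by
  have := Finset.card_filter_add_card_filter_not
    (s := (Finset.univ : Finset (Fin m → Bool))) (p := fun x => Even (wt x))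
  simp only [Nat.not_even_iff_odd] at this
  rw [evenF, oddF, this]
  simp [Finset.card_univ]

lemma card_evenF_eq_card_oddF (hm : 1 ≤ m) : (evenF m).card = (oddF m).card := by
  have h0 : (0 : ℕ) < m := hm
  set e0 : Fin m → Bool := fun j => decide (j = ⟨0, h0⟩) with he0
  have hwt : wt e0 = 1 := by
    rw [wt]
    rw [show (Finset.univ.filter fun j => e0 j = true) = {⟨0, h0⟩} from by
      ext j; simp [he0]]
    simp
  have hflip : ∀ x : Fin m → Bool, Even (wt x) ↔ Odd (wt (xo x e0)) := by
    intro x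
    rw [odd_wt_xo]
    constructor
    · intro hx h; have := (h.mp hx); rw [hwt] at this; exact (Nat.not_even_one) this
    · intro h; by_contra hx
      exact h (iff_of_false hx (by rw [hwt]; exact Nat.not_even_one))
  refine Finset.card_bij' (fun x _ => xo x e0) (fun x _ => xo x e0) ?_ ?_ ?_ ?_
  · intro a ha
    simp only [evenF, Finset.mem_filter, Finset.mem_univ, true_and] at ha
    simp only [oddF, Finset.mem_filter, Finset.mem_univ, true_and]
    exact (hflip a).mp ha
  · intro a ha
    simp only [oddF, Finset.mem_filter, Finset.mem_univ, true_and] at ha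
    simp only [evenF, Finset.mem_filter, Finset.mem_univ, true_and]
    have := hflip (xo a e0)
    rw [xo_assoc, xo_self, xo_false'] at this
    exact this.mpr ha
  · intro a _; show xo (xo a e0) e0 = a; rw [xo_assoc, xo_self, xo_false']
  · intro a _; show xo (xo a e0) e0 = a; rw [xo_assoc, xo_self, xo_false']

lemma card_evenF (hm : 1 ≤ m) : (evenF m).card = 2 ^ (m - 1) := by
  have h1 := card_evenF_add_card_oddF (m := m)
  have h2 := card_evenF_eq_card_oddF hm
  have : 2 ^ m = 2 ^ (m - 1) * 2 := by
    rw [← pow_succ]; congr 1; omega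
  omega

lemma card_oddF (hm : 1 ≤ m) : (oddF m).card = 2 ^ (m - 1) := by
  rw [← card_evenF_eq_card_oddF hm, card_evenF hm]

end Aux3
section Aux4
variable {m : ℕ}

/-- the limit matrix -/
noncomputable def Modd (m : ℕ) : Matrix (Idx m) (Idx m) ℂ :=
  Matrix.of fun p q => if Odd (wt (xo p.2 q.2)) then 1 else 0

lemma sum_T_S :
    ∑ d ∈ Finset.univ.filter (fun d : Idx m => Odd (wt d.2)), Tmat d = Modd m := by
  ext p q
  rw [Matrix.sum_apply]
  simp only [Tmat, Matrix.of_apply]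
  rw [Finset.sum_ite_eq]
  simp [Modd, xo2]

lemma odd_wt_xo_oe {n : ℕ} {x y : Fin n → Bool} (hx : Odd (wt x)) (hy : Even (wt y)) :
    Odd (wt (xo x y)) := by
  rw [odd_wt_xo]; intro h; exact (Nat.not_even_iff_odd.mpr hx) (h.mpr hy)
lemma odd_wt_xo_eo {n : ℕ} {x y : Fin n → Bool} (hx : Even (wt x)) (hy : Odd (wt y)) :
    Odd (wt (xo x y)) := by
  rw [odd_wt_xo]; intro h; exact (Nat.not_even_iff_odd.mpr hy) (h.mp hx)
lemma even_wt_xo_oo {n : ℕ} {x y : Fin n → Bool} (hx : Odd (wt x)) (hy : Odd (wt y)) :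
    Even (wt (xo x y)) :=
  (even_wt_xo x y).mpr
    (iff_of_false (Nat.not_even_iff_odd.mpr hx) (Nat.not_even_iff_odd.mpr hy))

lemma sum_keys (hm : 1 ≤ m) :
    ∑ k ∈ KeyPairs m, ((2:ℂ) • (Tmat k.2 + Tmat (xo2 k.1 k.2)))
      = ((2:ℂ) ^ (2*m-1)) • Modd m := by
  classical
  set A : Finset (Idx m) := Finset.univ.filter fun k => Odd (wt k.1) ∧ Even (wt k.2) with hA
  set B : Finset (Idx m) := Finset.univ.filter fun k => Even (wt k.1) ∧ Odd (wt k.2) with hB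
  set C : Finset (Idx m) := Finset.univ.filter fun k => Odd (wt k.1) ∧ Odd (wt k.2) with hC
  set S : Finset (Idx m) := Finset.univ.filter fun d => Odd (wt d.2) with hS
  have hKP : KeyPairs m = A ×ˢ B := by
    ext k
    simp only [KeyPairs, hA, hB, Finset.mem_filter, Finset.mem_product, Finset.mem_univ,
      true_and]
    tauto
  have hBC : ∀ k1, Odd (wt k1.1) → Even (wt k1.2) →
      ∑ k2 ∈ B, Tmat (xo2 k1 k2) = ∑ d ∈ C, Tmat d := by
    intro k1 h1 h2
    refine Finset.sum_nbij' (fun k2 => xo2 k1 k2) (fun d => xo2 k1 d) ?_ ?_ ?_ ?_ ?_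
    · intro k2 hk2
      simp only [hB, Finset.mem_filter, Finset.mem_univ, true_and] at hk2
      simp only [hC, Finset.mem_filter, Finset.mem_univ, true_and]
      exact ⟨odd_wt_xo_oe h1 hk2.1, odd_wt_xo_eo h2 hk2.2⟩
    · intro d hd
      simp only [hC, Finset.mem_filter, Finset.mem_univ, true_and] at hd
      simp only [hB, Finset.mem_filter, Finset.mem_univ, true_and]
      exact ⟨even_wt_xo_oo h1 hd.1, odd_wt_xo_eo h2 hd.2⟩
    · intro k2 _; show xo2 k1 (xo2 k1 k2) = k2; rw [xo2_self_left]
    · intro d _; show xo2 k1 (xo2 k1 d) = d; rw [xo2_self_left]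
    · intro k2 _; rfl
  have hdisj : Disjoint B C := by
    rw [Finset.disjoint_left]
    intro d hdB hdC
    simp only [hB, hC, Finset.mem_filter, Finset.mem_univ, true_and] at hdB hdC
    rw [← Nat.not_even_iff_odd] at hdC
    exact hdC.1 hdB.1
  have hunion : B ∪ C = S := by
    ext d
    simp only [hB, hC, hS, Finset.mem_union, Finset.mem_filter, Finset.mem_univ, true_and]
    constructor
    · tauto
    · intro h
      rcases Nat.even_or_odd (wt d.1) with he | ho
      · exact Or.inl ⟨he, h⟩
      · exact Or.inr ⟨ho, h⟩
  have hcardA : A.card = 2 ^ (m-1) * 2 ^ (m-1) := by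
    have : A = oddF m ×ˢ evenF m := by
      ext k
      simp only [hA, oddF, evenF, Finset.mem_filter, Finset.mem_product, Finset.mem_univ,
        true_and]
    rw [this, Finset.card_product, card_oddF hm, card_evenF hm]
  rw [hKP, Finset.sum_product]
  have step : ∀ k1 ∈ A, ∑ k2 ∈ B, ((2:ℂ) • (Tmat k2 + Tmat (xo2 k1 k2)))
      = (2:ℂ) • (∑ d ∈ S, Tmat d) := by
    intro k1 hk1
    simp only [hA, Finset.mem_filter, Finset.mem_univ, true_and] at hk1
    rw [← Finset.smul_sum]
    congr 1
    rw [Finset.sum_add_distrib, hBC k1 hk1.1 hk1.2, ← Finset.sum_union hdisj, hunion]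
  rw [Finset.sum_congr rfl step, Finset.sum_const, sum_T_S]
  rw [← Nat.cast_smul_eq_nsmul ℂ, smul_smul]
  congr 1
  rw [hcardA]
  push_cast
  rw [← pow_add, ← pow_succ]
  congr 1
  omega
end Aux4
section Aux5
variable {m : ℕ}

lemma diff_eq (hm : 1 ≤ m) :
    rhoOdd2 m false false - rhoOdd2 m false true = ((8:ℂ)/2^(4*m)) • Modd m := by
  rw [rhoOdd2, rhoOdd2, ← smul_sub, ← Finset.sum_sub_distrib]
  have h : ∀ k ∈ KeyPairs m, ((∑ i : Idx m, outer (Psi k.1 k.2 i false false))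
      - ∑ i : Idx m, outer (Psi k.1 k.2 i false true))
      = (2:ℂ) • (Tmat k.2 + Tmat (xo2 k.1 k.2)) := by
    intro k _
    rw [← Finset.sum_sub_distrib]
    exact key_sum k.1 k.2
  rw [Finset.sum_congr rfl h, sum_keys hm, smul_smul]
  congr 1
  have e1 : ((2:ℂ) ^ (4*m-4) * 2 ^ (2*m)) ≠ 0 := by positivity
  have e2 : ((2:ℂ) ^ (4*m)) ≠ 0 := by positivity
  rw [div_mul_eq_mul_div, one_mul, div_eq_div_iff e1 e2]
  rw [show (8:ℂ) = 2^3 by norm_num, ← pow_add, ← pow_add, ← pow_add]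
  congr 1
  omega

/-- all-ones vector -/
def uvec (m : ℕ) : Idx m → ℂ := fun _ => 1
/-- parity sign vector -/
noncomputable def vvec (m : ℕ) : Idx m → ℂ := fun p => if Even (wt p.2) then 1 else -1

lemma outer_mul_outer (v w : Idx m → ℂ) :
    outer v * outer w = (∑ r, starRingEnd ℂ (v r) * w r) •
      Matrix.of (fun p q => v p * starRingEnd ℂ (w q)) := by
  ext p q
  simp only [Matrix.mul_apply, outer, Matrix.of_apply, Matrix.smul_apply, smul_eq_mul]
  rw [Finset.sum_mul]
  exact Finset.sum_congr rfl fun r _ => by ring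

lemma card_idx : (Fintype.card (Idx m) : ℂ) = 2 ^ (2*m) := by
  rw [Fintype.card_prod]
  simp only [Fintype.card_fun, Fintype.card_bool, Fintype.card_fin]
  push_cast
  rw [← pow_add]
  congr 1
  omega

lemma dot_uu : (∑ r : Idx m, starRingEnd ℂ (uvec m r) * uvec m r) = 2 ^ (2*m) := by
  simp only [uvec, _root_.map_one, mul_one, Finset.sum_const, Finset.card_univ, nsmul_eq_mul]
  exact card_idx

lemma dot_vv : (∑ r : Idx m, starRingEnd ℂ (vvec m r) * vvec m r) = 2 ^ (2*m) := by
  have h : ∀ r : Idx m, starRingEnd ℂ (vvec m r) * vvec m r = 1 := by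
    intro r
    simp only [vvec]
    split_ifs <;> simp
  rw [Finset.sum_congr rfl fun r _ => h r]
  simp only [Finset.sum_const, Finset.card_univ, nsmul_eq_mul, mul_one]
  exact card_idx

lemma sum_vvec_half (hm : 1 ≤ m) :
    (∑ r2 : Fin m → Bool, (if Even (wt r2) then (1:ℂ) else -1)) = 0 := by
  rw [← Finset.sum_filter_add_sum_filter_not Finset.univ (fun r2 => Even (wt r2))]
  rw [Finset.sum_ite_of_true (by intro x hx; exact (Finset.mem_filter.mp hx).2),
      Finset.sum_ite_of_false (by intro x hx; exact (Finset.mem_filter.mp hx).2)]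
  simp only [Finset.sum_const, nsmul_eq_mul, mul_one, mul_neg_one]
  rw [show Finset.univ.filter (fun r2 : Fin m → Bool => Even (wt r2)) = evenF m from rfl]
  rw [show Finset.univ.filter (fun r2 : Fin m → Bool => ¬ Even (wt r2)) = oddF m from by
    simp [oddF, Nat.not_even_iff_odd]]
  rw [card_evenF_eq_card_oddF hm]
  ring

lemma dot_uv (hm : 1 ≤ m) : (∑ r : Idx m, starRingEnd ℂ (uvec m r) * vvec m r) = 0 := by
  simp only [uvec, _root_.map_one, one_mul]
  rw [show (∑ r : Idx m, vvec m r) = ∑ r1 : Fin m → Bool, ∑ r2 : Fin m → Bool, vvec m (r1, r2)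
    from Fintype.sum_prod_type _]
  simp only [vvec]
  rw [Finset.sum_congr rfl fun r1 _ => sum_vvec_half hm]
  simp

lemma dot_vu (hm : 1 ≤ m) : (∑ r : Idx m, starRingEnd ℂ (vvec m r) * uvec m r) = 0 := by
  have h : ∀ r : Idx m, starRingEnd ℂ (vvec m r) * uvec m r
      = starRingEnd ℂ (uvec m r) * vvec m r := by
    intro r
    simp only [uvec, vvec, _root_.map_one, one_mul, mul_one]
    split_ifs <;> simp
  rw [Finset.sum_congr rfl fun r _ => h r, dot_uv hm]

end Aux5
section Aux6
variable {m : ℕ}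

lemma modd_split : Modd m = (1/2 : ℂ) • (outer (uvec m) - outer (vvec m)) := by
  ext p q
  simp only [Modd, Matrix.of_apply, Matrix.smul_apply, Matrix.sub_apply, outer, uvec, vvec,
    smul_eq_mul, _root_.map_one, mul_one, one_mul]
  by_cases hp : Even (wt p.2) <;> by_cases hq : Even (wt q.2)
  · have h := (even_wt_xo p.2 q.2).mpr (iff_of_true hp hq)
    rw [if_neg (Nat.not_odd_iff_even.mpr h), if_pos hp, if_pos hq]
    simp only [_root_.map_one, map_neg]; norm_num
  · have h := odd_wt_xo_eo hp (Nat.not_even_iff_odd.mp hq)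
    rw [if_pos h, if_pos hp, if_neg hq]
    simp only [_root_.map_one, map_neg]; norm_num
  · have h := odd_wt_xo_oe (Nat.not_even_iff_odd.mp hp) hq
    rw [if_pos h, if_neg hp, if_pos hq]
    simp only [_root_.map_one, map_neg]; norm_num
  · have h := even_wt_xo_oo (Nat.not_even_iff_odd.mp hp) (Nat.not_even_iff_odd.mp hq)
    rw [if_neg (Nat.not_odd_iff_even.mpr h), if_neg hp, if_neg hq]
    simp only [_root_.map_one, map_neg]; norm_num

lemma modd_herm : (Modd m)ᴴ = Modd m := by
  ext p q
  rw [Matrix.conjTranspose_apply]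
  simp only [Modd, Matrix.of_apply, apply_ite (star : ℂ → ℂ), star_one, star_zero]
  rw [xo_comm]

lemma posSemidef_outer (v : Idx m → ℂ) : (outer v).PosSemidef := by
  refine Matrix.PosSemidef.of_dotProduct_mulVec_nonneg ?_ ?_
  · ext p q
    simp only [outer, Matrix.conjTranspose_apply, Matrix.of_apply]
    rw [StarMul.star_mul, starRingEnd_apply, star_star, ← starRingEnd_apply, mul_comm]
  · intro x
    have h : (star x ⬝ᵥ (outer v *ᵥ x))
        = (∑ p, star (x p) * v p) * star (∑ p, star (x p) * v p) := by
      have hstar : star (∑ p, star (x p) * v p) = ∑ q, starRingEnd ℂ (v q) * x q := by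
        rw [star_sum]
        exact Finset.sum_congr rfl fun q _ => by
          rw [StarMul.star_mul, star_star, ← starRingEnd_apply]
      rw [hstar]
      simp only [dotProduct, Matrix.mulVec, dotProduct, outer, Matrix.of_apply, Pi.star_apply]
      rw [Finset.sum_mul_sum]
      refine Finset.sum_congr rfl fun p _ => ?_
      rw [Finset.mul_sum]
      exact Finset.sum_congr rfl fun q _ => by ring
    rw [h]
    exact mul_star_self_nonneg _

lemma posSemidef_smul {M : Matrix (Idx m) (Idx m) ℂ} (hM : M.PosSemidef) {c : ℂ}
    (hc : 0 ≤ c) : (c • M).PosSemidef := by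
  refine Matrix.PosSemidef.of_dotProduct_mulVec_nonneg ?_ ?_
  · show (c • M)ᴴ = c • M
    rw [Matrix.conjTranspose_smul, hM.1, (IsSelfAdjoint.of_nonneg hc).star_eq]
  · intro x
    rw [Matrix.smul_mulVec, dotProduct_smul, smul_eq_mul]
    exact mul_nonneg hc (hM.dotProduct_mulVec_nonneg x)

lemma outer_sq_u : outer (uvec m) * outer (uvec m) = ((2:ℂ) ^ (2*m)) • outer (uvec m) := by
  rw [outer_mul_outer, dot_uu]; rfl

lemma outer_sq_v : outer (vvec m) * outer (vvec m) = ((2:ℂ) ^ (2*m)) • outer (vvec m) := by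
  rw [outer_mul_outer, dot_vv]; rfl

lemma outer_uv (hm : 1 ≤ m) : outer (uvec m) * outer (vvec m) = 0 := by
  rw [outer_mul_outer, dot_uv hm, zero_smul]

lemma outer_vu (hm : 1 ≤ m) : outer (vvec m) * outer (uvec m) = 0 := by
  rw [outer_mul_outer, dot_vu hm, zero_smul]

lemma trace_outer (w : Idx m → ℂ) :
    (outer w).trace = ∑ p, w p * starRingEnd ℂ (w p) := by
  simp [Matrix.trace, Matrix.diag, outer]

lemma trace_outer_u : (outer (uvec m)).trace = 2 ^ (2*m) := by
  rw [trace_outer, ← dot_uu]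
  exact Finset.sum_congr rfl fun p _ => mul_comm _ _

lemma trace_outer_v : (outer (vvec m)).trace = 2 ^ (2*m) := by
  rw [trace_outer, ← dot_vv]
  exact Finset.sum_congr rfl fun p _ => mul_comm _ _

end Aux6
section Aux7
variable {m : ℕ}

lemma sq_UV (hm : 1 ≤ m) :
    (outer (uvec m) + outer (vvec m)) * (outer (uvec m) + outer (vvec m))
      = ((2:ℂ)^(2*m)) • (outer (uvec m) + outer (vvec m)) := by
  rw [add_mul, mul_add, mul_add, outer_sq_u, outer_sq_v, outer_uv hm, outer_vu hm,
    smul_add, add_zero, zero_add]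

lemma modd_sq (hm : 1 ≤ m) :
    Modd m * Modd m = ((2:ℂ)^(2*m)/4) • (outer (uvec m) + outer (vvec m)) := by
  rw [modd_split, Matrix.smul_mul, Matrix.mul_smul, smul_smul, sub_mul, mul_sub, mul_sub,
      outer_sq_u, outer_sq_v, outer_uv hm, outer_vu hm, sub_zero, zero_sub, sub_neg_eq_add,
      ← smul_add, smul_smul]
  congr 1
  ring

lemma cfc_sqrt_sq_psd {ι : Type*} [Fintype ι] [DecidableEq ι] {R : Matrix ι ι ℂ}
    (hR : R.PosSemidef) : cfc Real.sqrt (R ^ 2) = R := by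
  have hsa : IsSelfAdjoint R := hR.1
  rw [← cfc_comp_pow Real.sqrt 2 R Real.continuous_sqrt.continuousOn hsa]
  nth_rewrite 2 [← cfc_id' ℝ R]
  refine cfc_congr fun x hx => ?_
  rw [hR.1.spectrum_real_eq_range_eigenvalues] at hx
  obtain ⟨i, rfl⟩ := hx
  exact Real.sqrt_sq (hR.eigenvalues_nonneg i)

lemma traceNorm_eq_of_sq {ι : Type*} [Fintype ι] [DecidableEq ι] {A R : Matrix ι ι ℂ}
    (hR : R.PosSemidef) (h : R ^ 2 = Aᴴ * A) : traceNorm A = R.trace.re := by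
  have e : ((Matrix.posSemidef_conjTranspose_mul_self A).1.eigenvectorUnitary.1 *
      diagonal (((↑) : ℝ → ℂ) ∘ (√·) ∘ (Matrix.posSemidef_conjTranspose_mul_self A).1.eigenvalues) *
      (star (Matrix.posSemidef_conjTranspose_mul_self A).1.eigenvectorUnitary : Matrix ι ι ℂ))
      = cfc Real.sqrt (Aᴴ * A) := by
    rw [(Matrix.posSemidef_conjTranspose_mul_self A).1.cfc_eq]; rfl
  rw [traceNorm, e, ← h, cfc_sqrt_sq_psd hR]

end Aux7

theorem traceDist_rho00_rho01 (m : ℕ) (hm : 1 ≤ m) :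
    (1/2 : ℝ) * traceNorm (rhoOdd2 m false false - rhoOdd2 m false true)
      = 1 / 2 ^ (2*m - 2) := by
  set z : ℂ := (8:ℂ)/2^(4*m) with hzdef
  have hzr : z = ((8 / 2^(4*m) : ℝ) : ℂ) := by rw [hzdef]; push_cast; ring
  have hzc : star z = z := by rw [hzr, ← starRingEnd_apply, Complex.conj_ofReal]
  set U := outer (uvec m) with hU
  set V := outer (vvec m) with hV
  set R : Matrix (Idx m) (Idx m) ℂ := (z/2) • (U + V) with hRdef
  have hRpsd : R.PosSemidef := by
    apply posSemidef_smul ((posSemidef_outer _).add (posSemidef_outer _))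
    rw [show z/2 = ((8 / 2^(4*m)/2 : ℝ) : ℂ) by rw [hzr]; push_cast; ring]
    rw [Complex.zero_le_real]
    positivity
  have hA : rhoOdd2 m false false - rhoOdd2 m false true = z • Modd m := diff_eq hm
  have hsq : R ^ 2 = (z • Modd m)ᴴ * (z • Modd m) := by
    rw [pow_two, hRdef, Matrix.smul_mul, Matrix.mul_smul, smul_smul, hU, hV, sq_UV hm,
        smul_smul, Matrix.conjTranspose_smul, modd_herm, Matrix.smul_mul, Matrix.mul_smul,
        smul_smul, modd_sq hm, smul_smul, hzc]
    congr 1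
    ring
  have hsqrt := traceNorm_eq_of_sq hRpsd hsq
  have hp : (2:ℂ)^(2*m) * 2^(2*m) = 2^(4*m) := by rw [← pow_add]; congr 1; omega
  have h3 : ((2:ℂ)^(2*m)) ≠ 0 := by positivity
  have h4 : ((2:ℂ)^(4*m)) ≠ 0 := by positivity
  have htr : R.trace = ((8 / 2^(2*m) : ℝ) : ℂ) := by
    rw [hRdef, Matrix.trace_smul, Matrix.trace_add, hU, hV, trace_outer_u, trace_outer_v,
        smul_eq_mul, hzdef]
    push_cast
    field_simp
    linear_combination (8:ℂ) * hp
  rw [hA, hsqrt, htr, Complex.ofReal_re]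
  have hq : (2:ℝ)^(2*m) = 2^(2*m-2)*4 := by
    rw [show (4:ℝ) = 2^2 by norm_num, ← pow_add]; congr 1; omega
  rw [hq]
  have h5 : ((2:ℝ)^(2*m-2)) ≠ 0 := by positivity
  field_simp
  ring
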